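/- Let L be a finite group acting by automorphisms on a nontrivial finite group Q, and let M be a proper normal subgroup of L such that every element of L \ M acts fixed-point-freely on Q (i.e., for l ∈ L \ M and q ∈ Q with q ≠ 1, l·q ≠ q). Then in the semidirect product G = Q ⋊ L, the image H of L satisfies H ∩ H^g ≤ H* for all g ∈ G \ H, where H* is the image of M; that is, G is a Frobenius–Wielandt group with FW complement isomorphic to L/M. -/

import Mathlib

open Pointwise

/-- If `L` acts on a nontrivial finite group `Q` so that every element of `L \ M`
acts fixed-point-freely, then in `G = Q ⋊ L` the canonical copy `H` of `L`
satisfies `H ∩ H^g ≤ H*` for all `g ∉ H`, where `H*` is the copy of `M`. -/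
theorem stmt_15 {L Q : Type*} [Group L] [Finite L] [Group Q] [Finite Q] [Nontrivial Q]
    (φ : L →* MulAut Q) (M : Subgroup L) [M.Normal] (hM : M ≠ ⊤)
    (hfpf : ∀ l : L, l ∉ M → ∀ q : Q, q ≠ 1 → φ l q ≠ q) :
    ∀ g : Q ⋊[φ] L, g ∉ (SemidirectProduct.inr : L →* Q ⋊[φ] L).range →
      (SemidirectProduct.inr : L →* Q ⋊[φ] L).range ⊓
          MulAut.conj g⁻¹ • (SemidirectProduct.inr : L →* Q ⋊[φ] L).range ≤
        M.map (SemidirectProduct.inr : L →* Q ⋊[φ] L) := by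
  intro g hg x hx
  obtain ⟨⟨l', hl'⟩, hx2⟩ := hx
  have hx2' : x ∈ MulAut.conj g⁻¹ • (SemidirectProduct.inr : L →* Q ⋊[φ] L).range := hx2
  rw [Subgroup.mem_smul_pointwise_iff_exists] at hx2'
  obtain ⟨y, ⟨m, hm⟩, hy⟩ := hx2'
  -- x = inr l', and x = g⁻¹ * inr m * g
  subst hm
  simp only [MulAut.smul_def, MulAut.conj_apply, inv_inv] at hy
  -- compare components
  have hq : g.left ≠ 1 := by
    intro h
    apply hg
    exact ⟨g.right, by ext <;> simp [h]⟩
  have hleft := congrArg SemidirectProduct.left hy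
  have hright := congrArg SemidirectProduct.right hy
  rw [← hl'] at hleft hright
  simp only [SemidirectProduct.mul_left, SemidirectProduct.mul_right,
    SemidirectProduct.inv_left, SemidirectProduct.inv_right,
    SemidirectProduct.left_inr, SemidirectProduct.right_inr, map_one, mul_one] at hleft hright
  -- hleft : something = 1
  have hmM : m ∈ M := by
    by_contra hmem
    apply hfpf m hmem g.left hq
    have h2 : (φ (g.right⁻¹ * m)) g.left = (φ g.right⁻¹) g.left := by
      rw [map_inv, inv_mul_eq_one] at hleft
      exact hleft.symm
    have h4 := congrArg (φ g.right) h2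
    simpa only [← MulAut.mul_apply, ← map_mul, mul_inv_cancel_left, mul_inv_cancel, map_one, MulAut.one_apply] using h4
  refine ⟨l', ?_, hl'⟩
  rw [← hright]
  simpa using Subgroup.Normal.conj_mem ‹M.Normal› m hmM g.right⁻¹
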